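/- An integral domain D is a ∗-Prüfer domain if and only if the group Inv^∗(D) of ∗-invertible ∗-ideals under ∗-multiplication, ordered by reverse inclusion, is a lattice-ordered abelian group in which sup(A,B) = A ∩ B and inf(A,B) = (A+B)^∗ for all A, B ∈ Inv^∗(D). -/

import Mathlib

open FractionalIdeal

/-- A star operation on an integral domain `D` with fraction field `K`, acting on
fractional ideals: it fixes `D`, is extensive, monotone, idempotent (all on nonzero
ideals), and commutes with multiplication by nonzero principal fractional ideals. -/
structure StarOp (D : Type*) [CommRing D] [IsDomain D] (K : Type*) [Field K]
    [Algebra D K] [IsFractionRing D K] where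
  star : FractionalIdeal (nonZeroDivisors D) K → FractionalIdeal (nonZeroDivisors D) K
  star_one : star 1 = 1
  le_star : ∀ {A}, A ≠ 0 → A ≤ star A
  star_mono : ∀ {A B}, A ≠ 0 → A ≤ B → star A ≤ star B
  star_idem : ∀ {A}, A ≠ 0 → star (star A) = star A
  star_smul : ∀ {A : FractionalIdeal (nonZeroDivisors D) K} (x : K), x ≠ 0 → A ≠ 0 →
    star (spanSingleton (nonZeroDivisors D) x * A) = spanSingleton (nonZeroDivisors D) x * star A

variable {D K : Type*} [CommRing D] [IsDomain D] [Field K] [Algebra D K] [IsFractionRing D K]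

set_option linter.unusedSectionVars false
set_option linter.unusedVariables false

namespace StarOpAux

variable (s : StarOp D K) {A B C I J F : FractionalIdeal (nonZeroDivisors D) K}

lemma ne_zero_of_le (hI : I ≠ 0) (h : I ≤ J) : J ≠ 0 := fun h0 => hI (FractionalIdeal.le_zero_iff.mp (h0 ▸ h))

lemma exists_ne_zero_mem (hI : I ≠ 0) : ∃ x ∈ I, x ≠ 0 := by
  by_contra h
  push_neg at h
  exact hI (eq_zero_iff.mpr h)

lemma mul_ne_zero' (hI : I ≠ 0) (hJ : J ≠ 0) : I * J ≠ 0 := by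
  obtain ⟨x, hx, hx0⟩ := exists_ne_zero_mem hI
  obtain ⟨y, hy, hy0⟩ := exists_ne_zero_mem hJ
  intro h0
  have hm : x * y ∈ I * J := mul_mem_mul hx hy
  rw [h0] at hm
  exact mul_ne_zero hx0 hy0 ((mem_zero_iff _).mp hm)

lemma inv_ne_zero' (hI : I ≠ 0) : I⁻¹ ≠ 0 := by
  obtain ⟨a, haS, ha⟩ := I.isFractional
  have hmem : algebraMap D K a ∈ I⁻¹ := by
    rw [mem_inv_iff hI]
    intro y hy
    obtain ⟨r, hr⟩ := ha y hy
    rw [mem_one_iff]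
    exact ⟨r, by rw [hr, Algebra.smul_def]⟩
  intro h0
  rw [h0] at hmem
  exact IsFractionRing.to_map_ne_zero_of_mem_nonZeroDivisors haS ((mem_zero_iff _).mp hmem)

lemma le_add_left' : I ≤ I + J := by rw [← sup_eq_add]; exact le_sup_left

lemma le_add_right' : J ≤ I + J := by rw [← sup_eq_add]; exact le_sup_right

lemma add_le' (h1 : I ≤ C) (h2 : J ≤ C) : I + J ≤ C := by
  rw [← sup_eq_add]; exact sup_le h1 h2

lemma mul_le_mul'' {I' J'} (h1 : I ≤ I') (h2 : J ≤ J') : I * J ≤ I' * J' :=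
  le_trans (mul_left_mono (a := J) h1) (mul_right_mono (a := I') h2)

lemma mul_inv_le_one' : I * I⁻¹ ≤ 1 := by
  rw [inv_eq]; exact mul_one_div_le_one

lemma star_ne_zero (hI : I ≠ 0) : s.star I ≠ 0 := ne_zero_of_le hI (s.le_star hI)

lemma star_mul_le (hI : I ≠ 0) (hJ : J ≠ 0) : s.star I * J ≤ s.star (I * J) := by
  rw [mul_le]
  intro i hi j hj
  rcases eq_or_ne j 0 with rfl | hj0
  · simpa using zero_mem (s.star (I * J))
  · have h1 : spanSingleton (nonZeroDivisors D) j * I ≤ I * J := by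
      rw [mul_comm I J]
      exact mul_left_mono (a := I) (spanSingleton_le_iff_mem.mpr hj)
    have h2 := s.star_mono (mul_ne_zero' (spanSingleton_ne_zero_iff.mpr hj0) hI) h1
    rw [s.star_smul j hj0 hI] at h2
    have hm : j * i ∈ spanSingleton (nonZeroDivisors D) j * s.star I :=
      mul_mem_mul (mem_spanSingleton_self _ _) hi
    rw [mul_comm i j]
    exact h2 hm

lemma star_mul_star_left (hI : I ≠ 0) (hJ : J ≠ 0) :
    s.star (s.star I * J) = s.star (I * J) := by
  have h1 : I * J ≤ s.star I * J := mul_left_mono (a := J) (s.le_star hI)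
  have hIJ := mul_ne_zero' hI hJ
  have hsIJ : s.star I * J ≠ 0 := ne_zero_of_le hIJ h1
  refine le_antisymm ?_ (s.star_mono hIJ h1)
  calc s.star (s.star I * J) ≤ s.star (s.star (I * J)) :=
        s.star_mono hsIJ (star_mul_le s hI hJ)
    _ = s.star (I * J) := s.star_idem hIJ

lemma inv_star (hF : F ≠ 0) : (s.star F)⁻¹ = F⁻¹ := by
  have hsF := star_ne_zero s hF
  refine le_antisymm (inv_anti_mono hF hsF (s.le_star hF)) ?_
  show F⁻¹ ≤ 1 / s.star F
  rw [le_div_iff_mul_le hsF]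
  calc F⁻¹ * s.star F = s.star F * F⁻¹ := mul_comm _ _
    _ ≤ s.star (F * F⁻¹) := star_mul_le s hF (inv_ne_zero' hF)
    _ ≤ s.star 1 := s.star_mono (mul_ne_zero' hF (inv_ne_zero' hF)) mul_inv_le_one'
    _ = 1 := s.star_one

lemma star_star_mul_inv (hF : F ≠ 0) :
    s.star (s.star F * (s.star F)⁻¹) = s.star (F * F⁻¹) := by
  rw [inv_star s hF, star_mul_star_left s hF (inv_ne_zero' hF)]

lemma star_add_star_right (hI : I ≠ 0) (hJ : J ≠ 0) :
    s.star (I + s.star J) = s.star (I + J) := by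
  have hIJ : I + J ≠ 0 := ne_zero_of_le hI le_add_left'
  have h1 : I + J ≤ I + s.star J := by
    rw [← sup_eq_add, ← sup_eq_add]
    exact sup_le_sup_left (s.le_star hJ) I
  have h2 : I + s.star J ≤ s.star (I + J) :=
    add_le' (le_trans le_add_left' (s.le_star hIJ)) (s.star_mono hJ le_add_right')
  refine le_antisymm ?_ (s.star_mono hIJ h1)
  calc s.star (I + s.star J) ≤ s.star (s.star (I + J)) :=
        s.star_mono (ne_zero_of_le hIJ h1) h2
    _ = s.star (I + J) := s.star_idem hIJ

lemma star_spanSingleton {x : K} (hx : x ≠ 0) :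
    s.star (spanSingleton (nonZeroDivisors D) x) = spanSingleton (nonZeroDivisors D) x := by
  have h := s.star_smul (A := 1) x hx one_ne_zero
  rwa [mul_one, s.star_one, mul_one] at h

lemma spanSingleton_triple {x : K} (hx : x ≠ 0) :
    spanSingleton (nonZeroDivisors D) x ≠ 0 ∧
      s.star (spanSingleton (nonZeroDivisors D) x) = spanSingleton (nonZeroDivisors D) x ∧
      s.star (spanSingleton (nonZeroDivisors D) x * (spanSingleton (nonZeroDivisors D) x)⁻¹) = 1 := by
  refine ⟨spanSingleton_ne_zero_iff.mpr hx, star_spanSingleton s hx, ?_⟩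
  rw [spanSingleton_inv, spanSingleton_mul_spanSingleton, mul_inv_cancel₀ hx,
    spanSingleton_one, s.star_one]

lemma add_mul_inf_le (A B : FractionalIdeal (nonZeroDivisors D) K) :
    (A + B) * (A ⊓ B) ≤ A * B := by
  rw [add_mul]
  refine add_le' (mul_right_mono (a := A) inf_le_right) ?_
  calc B * (A ⊓ B) ≤ B * A := mul_right_mono (a := B) inf_le_left
    _ = A * B := mul_comm _ _

lemma inf_ne_zero (hA : A ≠ 0) (hB : B ≠ 0) : A ⊓ B ≠ 0 := by
  obtain ⟨a, ha, ha0⟩ := exists_ne_zero_mem hA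
  obtain ⟨b, hb, hb0⟩ := exists_ne_zero_mem hB
  obtain ⟨dA, hdAS, hdA⟩ := A.isFractional
  obtain ⟨dB, hdBS, hdB⟩ := B.isFractional
  obtain ⟨r, hr⟩ := hdA a ha
  obtain ⟨t, ht⟩ := hdB b hb
  set z := (dA • a) * (dB • b) with hz
  have hzA : z ∈ A := by
    have hzz : z = (t * dA) • a := by
      rw [hz, ← ht, Algebra.smul_def, Algebra.smul_def, _root_.map_mul]; ring
    rw [← mem_coe, hzz]
    exact Submodule.smul_mem _ _ ha
  have hzB : z ∈ B := by
    have hzz : z = (r * dB) • b := by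
      rw [hz, ← hr, Algebra.smul_def, Algebra.smul_def, _root_.map_mul]; ring
    rw [← mem_coe, hzz]
    exact Submodule.smul_mem _ _ hb
  have hz0 : z ≠ 0 := by
    rw [hz, Algebra.smul_def, Algebra.smul_def]
    exact mul_ne_zero
      (mul_ne_zero (IsFractionRing.to_map_ne_zero_of_mem_nonZeroDivisors hdAS) ha0)
      (mul_ne_zero (IsFractionRing.to_map_ne_zero_of_mem_nonZeroDivisors hdBS) hb0)
  have hzmem : z ∈ A ⊓ B := by
    rw [← mem_coe, coe_inf]
    exact Submodule.mem_inf.mpr ⟨hzA, hzB⟩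
  intro h0
  rw [h0] at hzmem
  exact hz0 ((mem_zero_iff _).mp hzmem)

lemma key_eq (hP : ∀ F : FractionalIdeal (nonZeroDivisors D) K, F ≠ 0 →
      (F : Submodule D K).FG → s.star (F * F⁻¹) = 1)
    (hA : A ≠ 0) (hB : B ≠ 0) :
    s.star ((A + B) * (A ⊓ B)) = s.star (A * B) := by
  have hinf := inf_ne_zero hA hB
  have hadd : A + B ≠ 0 := ne_zero_of_le hA le_add_left'
  have hAB := mul_ne_zero' hA hB
  refine le_antisymm (s.star_mono (mul_ne_zero' hadd hinf) (add_mul_inf_le A B)) ?_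
  have hsub : A * B ≤ s.star ((A + B) * (A ⊓ B)) := by
    rw [mul_le]
    intro a ha b hb
    rcases eq_or_ne a 0 with rfl | ha0
    · simpa using zero_mem (s.star ((A + B) * (A ⊓ B)))
    rcases eq_or_ne b 0 with rfl | hb0
    · simpa using zero_mem (s.star ((A + B) * (A ⊓ B)))
    set F := spanSingleton (nonZeroDivisors D) a + spanSingleton (nonZeroDivisors D) b with hFdef
    have hFa : spanSingleton (nonZeroDivisors D) a ≤ F := le_add_left'
    have hFb : spanSingleton (nonZeroDivisors D) b ≤ F := le_add_right'
    have hF0 : F ≠ 0 := ne_zero_of_le (spanSingleton_ne_zero_iff.mpr ha0) hFa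
    have hFinv0 : F⁻¹ ≠ 0 := inv_ne_zero' hF0
    have hFG : (F : Submodule D K).FG := by
      rw [hFdef, coe_add, coe_spanSingleton, coe_spanSingleton, Submodule.add_eq_sup]
      exact Submodule.FG.sup (Submodule.fg_span_singleton a) (Submodule.fg_span_singleton b)
    have hFinv := hP F hF0 hFG
    have hFle : F ≤ A + B :=
      add_le' (le_trans (spanSingleton_le_iff_mem.mpr ha) le_add_left')
        (le_trans (spanSingleton_le_iff_mem.mpr hb) le_add_right')
    have hFF : F * F⁻¹ ≤ 1 := mul_inv_le_one'
    have hmul1 : spanSingleton (nonZeroDivisors D) (a * b) * F⁻¹ ≤ A ⊓ B := by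
      rw [← spanSingleton_mul_spanSingleton]
      refine le_inf ?_ ?_
      · calc spanSingleton (nonZeroDivisors D) a * spanSingleton (nonZeroDivisors D) b * F⁻¹
            = spanSingleton (nonZeroDivisors D) a * (spanSingleton (nonZeroDivisors D) b * F⁻¹) :=
              mul_assoc _ _ _
          _ ≤ spanSingleton (nonZeroDivisors D) a * (F * F⁻¹) :=
              mul_right_mono (mul_left_mono hFb)
          _ ≤ spanSingleton (nonZeroDivisors D) a * 1 := mul_right_mono hFF
          _ = spanSingleton (nonZeroDivisors D) a := mul_one _
          _ ≤ A := spanSingleton_le_iff_mem.mpr ha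
      · calc spanSingleton (nonZeroDivisors D) a * spanSingleton (nonZeroDivisors D) b * F⁻¹
            = spanSingleton (nonZeroDivisors D) b * (spanSingleton (nonZeroDivisors D) a * F⁻¹) := by
              ring
          _ ≤ spanSingleton (nonZeroDivisors D) b * (F * F⁻¹) :=
              mul_right_mono (mul_left_mono hFa)
          _ ≤ spanSingleton (nonZeroDivisors D) b * 1 := mul_right_mono hFF
          _ = spanSingleton (nonZeroDivisors D) b := mul_one _
          _ ≤ B := spanSingleton_le_iff_mem.mpr hb
    have hne : F * F⁻¹ ≠ 0 := mul_ne_zero' hF0 hFinv0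
    have hab0 : a * b ≠ 0 := mul_ne_zero ha0 hb0
    have hstep : spanSingleton (nonZeroDivisors D) (a * b)
        = s.star (spanSingleton (nonZeroDivisors D) (a * b) * (F * F⁻¹)) := by
      rw [s.star_smul (a * b) hab0 hne, hFinv, mul_one]
    have hle2 : spanSingleton (nonZeroDivisors D) (a * b) * (F * F⁻¹) ≤ (A + B) * (A ⊓ B) := by
      have heq : spanSingleton (nonZeroDivisors D) (a * b) * (F * F⁻¹)
          = F * (spanSingleton (nonZeroDivisors D) (a * b) * F⁻¹) := by ring
      rw [heq]
      exact mul_le_mul'' hFle hmul1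
    have hfin := s.star_mono
      (mul_ne_zero' (spanSingleton_ne_zero_iff.mpr hab0) hne) hle2
    rw [← hstep] at hfin
    exact hfin (mem_spanSingleton_self _ _)
  calc s.star (A * B) ≤ s.star (s.star ((A + B) * (A ⊓ B))) := s.star_mono hAB hsub
    _ = s.star ((A + B) * (A ⊓ B)) := s.star_idem (mul_ne_zero' hadd hinf)

lemma comp1 (hA0 : A ≠ 0) (hB0 : B ≠ 0)
    (hAi : s.star (A * A⁻¹) = 1) (hBi : s.star (B * B⁻¹) = 1) :
    s.star ((A * A⁻¹) * (B * B⁻¹)) = 1 := by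
  rw [← star_mul_star_left s (mul_ne_zero' hA0 (inv_ne_zero' hA0))
    (mul_ne_zero' hB0 (inv_ne_zero' hB0)), hAi, one_mul, hBi]

lemma star_prod_X (hP : ∀ F : FractionalIdeal (nonZeroDivisors D) K, F ≠ 0 →
      (F : Submodule D K).FG → s.star (F * F⁻¹) = 1)
    (hA0 : A ≠ 0) (hB0 : B ≠ 0)
    (hAi : s.star (A * A⁻¹) = 1) (hBi : s.star (B * B⁻¹) = 1) :
    s.star (((A + B) * (A ⊓ B)) * (A⁻¹ * B⁻¹)) = 1 := by
  have hinf := inf_ne_zero hA0 hB0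
  have hadd : A + B ≠ 0 := ne_zero_of_le hA0 le_add_left'
  have h1 : (A + B) * (A ⊓ B) ≠ 0 := mul_ne_zero' hadd hinf
  have hinvinv : A⁻¹ * B⁻¹ ≠ 0 := mul_ne_zero' (inv_ne_zero' hA0) (inv_ne_zero' hB0)
  have hAB := mul_ne_zero' hA0 hB0
  rw [← star_mul_star_left s h1 hinvinv, key_eq s hP hA0 hB0,
    star_mul_star_left s hAB hinvinv]
  have heq : (A * B) * (A⁻¹ * B⁻¹) = (A * A⁻¹) * (B * B⁻¹) := by ring
  rw [heq]
  exact comp1 s hA0 hB0 hAi hBi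

lemma star_inf_inv (hP : ∀ F : FractionalIdeal (nonZeroDivisors D) K, F ≠ 0 →
      (F : Submodule D K).FG → s.star (F * F⁻¹) = 1)
    (hA0 : A ≠ 0) (hB0 : B ≠ 0)
    (hAi : s.star (A * A⁻¹) = 1) (hBi : s.star (B * B⁻¹) = 1) :
    s.star ((A ⊓ B) * (A ⊓ B)⁻¹) = 1 := by
  have hinf := inf_ne_zero hA0 hB0
  have hadd : A + B ≠ 0 := ne_zero_of_le hA0 le_add_left'
  have hX0 : (A + B) * (A⁻¹ * B⁻¹) ≠ 0 :=
    mul_ne_zero' hadd (mul_ne_zero' (inv_ne_zero' hA0) (inv_ne_zero' hB0))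
  refine le_antisymm ?_ ?_
  · calc s.star ((A ⊓ B) * (A ⊓ B)⁻¹) ≤ s.star 1 :=
        s.star_mono (mul_ne_zero' hinf (inv_ne_zero' hinf)) mul_inv_le_one'
      _ = 1 := s.star_one
  · have hXle : (A + B) * (A⁻¹ * B⁻¹) ≤ (A ⊓ B)⁻¹ := by
      show (A + B) * (A⁻¹ * B⁻¹) ≤ 1 / (A ⊓ B)
      rw [le_div_iff_mul_le hinf]
      calc (A + B) * (A⁻¹ * B⁻¹) * (A ⊓ B) = ((A + B) * (A ⊓ B)) * (A⁻¹ * B⁻¹) := by ring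
        _ ≤ (A * B) * (A⁻¹ * B⁻¹) := mul_left_mono (add_mul_inf_le A B)
        _ = (A * A⁻¹) * (B * B⁻¹) := by ring
        _ ≤ 1 * 1 := mul_le_mul'' mul_inv_le_one' mul_inv_le_one'
        _ = 1 := one_mul 1
    have h2 : (A ⊓ B) * ((A + B) * (A⁻¹ * B⁻¹)) ≤ (A ⊓ B) * (A ⊓ B)⁻¹ :=
      mul_right_mono hXle
    have h3 := s.star_mono (mul_ne_zero' hinf hX0) h2
    have h4 : (A ⊓ B) * ((A + B) * (A⁻¹ * B⁻¹)) = ((A + B) * (A ⊓ B)) * (A⁻¹ * B⁻¹) := by ring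
    rw [h4, star_prod_X s hP hA0 hB0 hAi hBi] at h3
    exact h3

lemma star_add_inv (hP : ∀ F : FractionalIdeal (nonZeroDivisors D) K, F ≠ 0 →
      (F : Submodule D K).FG → s.star (F * F⁻¹) = 1)
    (hA0 : A ≠ 0) (hB0 : B ≠ 0)
    (hAi : s.star (A * A⁻¹) = 1) (hBi : s.star (B * B⁻¹) = 1) :
    s.star ((A + B) * (A + B)⁻¹) = 1 := by
  have hinf := inf_ne_zero hA0 hB0
  have hadd : A + B ≠ 0 := ne_zero_of_le hA0 le_add_left'
  have hY0 : (A ⊓ B) * (A⁻¹ * B⁻¹) ≠ 0 :=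
    mul_ne_zero' hinf (mul_ne_zero' (inv_ne_zero' hA0) (inv_ne_zero' hB0))
  refine le_antisymm ?_ ?_
  · calc s.star ((A + B) * (A + B)⁻¹) ≤ s.star 1 :=
        s.star_mono (mul_ne_zero' hadd (inv_ne_zero' hadd)) mul_inv_le_one'
      _ = 1 := s.star_one
  · have hYle : (A ⊓ B) * (A⁻¹ * B⁻¹) ≤ (A + B)⁻¹ := by
      show (A ⊓ B) * (A⁻¹ * B⁻¹) ≤ 1 / (A + B)
      rw [le_div_iff_mul_le hadd]
      calc (A ⊓ B) * (A⁻¹ * B⁻¹) * (A + B) = ((A + B) * (A ⊓ B)) * (A⁻¹ * B⁻¹) := by ring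
        _ ≤ (A * B) * (A⁻¹ * B⁻¹) := mul_left_mono (add_mul_inf_le A B)
        _ = (A * A⁻¹) * (B * B⁻¹) := by ring
        _ ≤ 1 * 1 := mul_le_mul'' mul_inv_le_one' mul_inv_le_one'
        _ = 1 := one_mul 1
    have h2 : (A + B) * ((A ⊓ B) * (A⁻¹ * B⁻¹)) ≤ (A + B) * (A + B)⁻¹ :=
      mul_right_mono hYle
    have h3 := s.star_mono (mul_ne_zero' hadd hY0) h2
    have h4 : (A + B) * ((A ⊓ B) * (A⁻¹ * B⁻¹)) = ((A + B) * (A ⊓ B)) * (A⁻¹ * B⁻¹) := by ring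
    rw [h4, star_prod_X s hP hA0 hB0 hAi hBi] at h3
    exact h3

end StarOpAux



open StarOpAux in
/-- `D` is a `∗`-Prüfer domain iff the group `Inv^∗(D)` of `∗`-invertible
`∗`-ideals, ordered by reverse inclusion, is lattice-ordered with
`sup (A,B) = A ∩ B` and `inf (A,B) = (A+B)^∗`: i.e. for all `A, B ∈ Inv^∗(D)`,
`A ∩ B` and `(A+B)^∗` belong to `Inv^∗(D)`, `A ∩ B` is the greatest element of
`Inv^∗(D)` contained in both, and `(A+B)^∗` is the least element of `Inv^∗(D)`
containing both. -/
theorem starPrufer_iff_latticeOrdered (s : StarOp D K) :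
    (∀ F : FractionalIdeal (nonZeroDivisors D) K, F ≠ 0 → (F : Submodule D K).FG → s.star (F * F⁻¹) = 1) ↔
    (∀ A B : FractionalIdeal (nonZeroDivisors D) K,
      (A ≠ 0 ∧ s.star A = A ∧ s.star (A * A⁻¹) = 1) →
      (B ≠ 0 ∧ s.star B = B ∧ s.star (B * B⁻¹) = 1) →
      ((A ⊓ B ≠ 0 ∧ s.star (A ⊓ B) = A ⊓ B ∧ s.star ((A ⊓ B) * (A ⊓ B)⁻¹) = 1) ∧
       (s.star (A + B) ≠ 0 ∧ s.star (s.star (A + B)) = s.star (A + B) ∧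
         s.star (s.star (A + B) * (s.star (A + B))⁻¹) = 1) ∧
       (∀ C : FractionalIdeal (nonZeroDivisors D) K, (C ≠ 0 ∧ s.star C = C ∧ s.star (C * C⁻¹) = 1) →
         C ≤ A → C ≤ B → C ≤ A ⊓ B) ∧
       (∀ C : FractionalIdeal (nonZeroDivisors D) K, (C ≠ 0 ∧ s.star C = C ∧ s.star (C * C⁻¹) = 1) →
         A ≤ C → B ≤ C → s.star (A + B) ≤ C))) := by
  constructor
  · -- forward: ∗-Prüfer implies lattice-ordered
    rintro hP A B ⟨hA0, hAs, hAi⟩ ⟨hB0, hBs, hBi⟩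
    have hinf := inf_ne_zero hA0 hB0
    have hadd : A + B ≠ 0 := ne_zero_of_le hA0 le_add_left'
    refine ⟨⟨hinf, ?_, star_inf_inv s hP hA0 hB0 hAi hBi⟩,
      ⟨star_ne_zero s hadd, s.star_idem hadd, ?_⟩, ?_, ?_⟩
    · have hsA : s.star (A ⊓ B) ≤ A := by
        have hh := s.star_mono hinf (inf_le_left (a := A) (b := B))
        rwa [hAs] at hh
      have hsB : s.star (A ⊓ B) ≤ B := by
        have hh := s.star_mono hinf (inf_le_right (a := A) (b := B))
        rwa [hBs] at hh
      exact le_antisymm (le_inf hsA hsB) (s.le_star hinf)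
    · rw [star_star_mul_inv s hadd]
      exact star_add_inv s hP hA0 hB0 hAi hBi
    · rintro C ⟨hC0, hCs, hCi⟩ h1 h2
      exact le_inf h1 h2
    · rintro C ⟨hC0, hCs, hCi⟩ h1 h2
      calc s.star (A + B) ≤ s.star C := s.star_mono hadd (add_le' h1 h2)
        _ = C := hCs
  · -- backward: lattice-ordered implies ∗-Prüfer
    intro h F hF0 hFG
    obtain ⟨T, hT⟩ := hFG
    suffices hclaim : ∀ (T : Finset K) (F : FractionalIdeal (nonZeroDivisors D) K),
        (F : Submodule D K) = Submodule.span D ↑T → F ≠ 0 →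
        s.star F ≠ 0 ∧ s.star (s.star F) = s.star F ∧
          s.star (s.star F * (s.star F)⁻¹) = 1 by
      have hres := (hclaim T F hT.symm hF0).2.2
      rwa [star_star_mul_inv s hF0] at hres
    clear hT hF0 F T
    classical
    intro T
    induction T using Finset.induction_on with
    | empty =>
      intro F hFT hF0
      exact absurd (coeToSubmodule_eq_bot.mp (by simpa using hFT)) hF0
    | @insert x T hx IH =>
      intro F hFT hF0
      rcases eq_or_ne x 0 with rfl | hx0
      · exact IH F (by rwa [Finset.coe_insert, Submodule.span_insert_zero] at hFT) hF0
      rcases eq_or_ne (Submodule.span D (T : Set K)) ⊥ with hT0 | hT0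
      · have hFx : F = spanSingleton (nonZeroDivisors D) x := by
          apply coeToSubmodule_injective
          show (F : Submodule D K)
            = ((spanSingleton (nonZeroDivisors D) x : FractionalIdeal (nonZeroDivisors D) K) :
                Submodule D K)
          rw [hFT, Finset.coe_insert, Submodule.span_insert, hT0, sup_bot_eq, coe_spanSingleton]
        obtain ⟨t1, t2, t3⟩ := spanSingleton_triple s (x := x) hx0
        rw [hFx, t2]
        exact ⟨t1, t2, t3⟩
      · have hle : Submodule.span D (T : Set K) ≤ (F : Submodule D K) := by
          rw [hFT]
          exact Submodule.span_mono (by simp [Finset.coe_insert, Set.subset_insert])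
        set G : FractionalIdeal (nonZeroDivisors D) K :=
          ⟨Submodule.span D (T : Set K), isFractional_of_le hle⟩ with hGdef
        have hGcoe : (G : Submodule D K) = Submodule.span D (T : Set K) := rfl
        have hG0 : G ≠ 0 := fun h0 => hT0 (hGcoe ▸ coeToSubmodule_eq_bot.mpr h0)
        obtain ⟨g1, g2, g3⟩ := IH G hGcoe hG0
        have hxs0 : spanSingleton (nonZeroDivisors D) x ≠ 0 := spanSingleton_ne_zero_iff.mpr hx0
        have hFxG : F = spanSingleton (nonZeroDivisors D) x + G := by
          apply coeToSubmodule_injective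
          show (F : Submodule D K)
            = ((spanSingleton (nonZeroDivisors D) x + G : FractionalIdeal (nonZeroDivisors D) K) :
                Submodule D K)
          rw [coe_add, coe_spanSingleton, hGcoe, hFT, Finset.coe_insert, Submodule.span_insert,
            Submodule.add_eq_sup]
        obtain ⟨c1, c2, c3⟩ :=
          (h (spanSingleton (nonZeroDivisors D) x) (s.star G)
            (spanSingleton_triple s hx0) ⟨star_ne_zero s hG0, s.star_idem hG0, g3⟩).2.1
        have hrw : s.star (spanSingleton (nonZeroDivisors D) x + s.star G) = s.star F := by
          rw [star_add_star_right s hxs0 hG0, ← hFxG]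
        rw [hrw] at c1 c2 c3
        exact ⟨c1, c2, c3⟩
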